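/- Let f : [0,1] → [0,1] be the map swapping digits 1 and 2 in the base-4 expansion. Then the restriction of f to any measurable set S ⊆ [0,1] of positive Lebesgue measure is not differentiable on S; more precisely, for every x ∈ S that is a Lebesgue density point of S and every real c, there exist points y ∈ S arbitrarily close to x with |(f(x)−f(y))/(x−y) − c| ≥ 1/2. -/

import Mathlib

open MeasureTheory Set Filter

/-- The digit substitution swapping 1 and 2, fixing 0 and 3. -/
def swapDigit : ℕ → ℕ
  | 1 => 2
  | 2 => 1
  | d => d

/-- The `n`-th digit (0-indexed) of `x` in base 4. -/
noncomputable def quatDigit (x : ℝ) (n : ℕ) : ℕ := (⌊x * 4 ^ (n + 1)⌋).toNat % 4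

/-- The map swapping digits 1 and 2 in the base-4 expansion. -/
noncomputable def swapMap (x : ℝ) : ℝ :=
  ∑' n : ℕ, (swapDigit (quatDigit x n) : ℝ) / 4 ^ (n + 1)

lemma swapDigit_le (d : ℕ) (hd : d < 4) : swapDigit d ≤ 3 := by
  interval_cases d <;> decide

lemma quatDigit_lt (x : ℝ) (n : ℕ) : quatDigit x n < 4 := Nat.mod_lt _ (by norm_num)

lemma summable_bound : Summable (fun k : ℕ => (3:ℝ)/4^(k+1)) := by
  have h := (summable_geometric_of_lt_one (by norm_num : (0:ℝ) ≤ 1/4) (by norm_num)).mul_left (3/4)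
  refine h.congr (fun k => ?_)
  rw [pow_succ]
  field_simp
  rw [← mul_pow]; norm_num

lemma tsum_bound : ∑' k : ℕ, (3:ℝ)/4^(k+1) = 1 := by
  have h : ∀ k : ℕ, (3:ℝ)/4^(k+1) = (3/4) * (1/4)^k := by
    intro k; rw [pow_succ]; field_simp; rw [← mul_pow]; norm_num
  rw [tsum_congr h, tsum_mul_left, tsum_geometric_of_lt_one (by norm_num) (by norm_num)]
  norm_num

lemma summable_swap (x : ℝ) : Summable (fun k : ℕ => (swapDigit (quatDigit x k) : ℝ)/4^(k+1)) := by
  apply Summable.of_nonneg_of_le (fun k => by positivity) _ summable_bound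
  intro k
  apply div_le_div_of_nonneg_right ?_ (by positivity)
  · exact_mod_cast Nat.cast_le.mpr (swapDigit_le _ (quatDigit_lt x k))

lemma swapMap_sub_single (x z : ℝ) (n : ℕ) (h : ∀ k, k ≠ n → quatDigit x k = quatDigit z k) :
    swapMap x - swapMap z
      = ((swapDigit (quatDigit x n) : ℝ) - (swapDigit (quatDigit z n) : ℝ)) / 4^(n+1) := by
  rw [swapMap, swapMap, ← Summable.tsum_sub (summable_swap x) (summable_swap z)]
  rw [tsum_eq_single n]
  · rw [div_sub_div_same]
  · intro k hk
    rw [h k hk]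
    ring

lemma swapMap_close (y z : ℝ) (m : ℕ) (h : ∀ k, k < m → quatDigit y k = quatDigit z k) :
    |swapMap y - swapMap z| ≤ 1/4^m := by
  have key : ∀ w : ℝ, swapMap w = (∑ k ∈ Finset.range m, (swapDigit (quatDigit w k) : ℝ)/4^(k+1))
      + ∑' k : ℕ, (swapDigit (quatDigit w (k+m)) : ℝ)/4^(k+m+1) := by
    intro w
    rw [swapMap, ← Summable.sum_add_tsum_nat_add m (summable_swap w)]
  have hsum : ∀ w : ℝ, Summable (fun k : ℕ => (swapDigit (quatDigit w (k+m)) : ℝ)/4^(k+m+1)) :=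
    fun w => ((summable_swap w).comp_injective (add_left_injective m))
  have hBsum : Summable (fun k : ℕ => (3:ℝ)/4^(k+m+1)) :=
    summable_bound.comp_injective (add_left_injective m)
  have hBval : ∑' k : ℕ, (3:ℝ)/4^(k+m+1) = 1/4^m := by
    have : ∀ k : ℕ, (3:ℝ)/4^(k+m+1) = (1/4^m) * (3/4^(k+1)) := by
      intro k
      rw [show k+m+1 = (k+1)+m by ring, pow_add]
      field_simp
    rw [tsum_congr this, tsum_mul_left, tsum_bound, mul_one]
  have tail_bd : ∀ w : ℝ, (0:ℝ) ≤ (∑' k : ℕ, (swapDigit (quatDigit w (k+m)) : ℝ)/4^(k+m+1))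
      ∧ (∑' k : ℕ, (swapDigit (quatDigit w (k+m)) : ℝ)/4^(k+m+1)) ≤ 1/4^m := by
    intro w
    constructor
    · exact tsum_nonneg (fun k => by positivity)
    · rw [← hBval]
      apply Summable.tsum_le_tsum _ (hsum w) hBsum
      intro k
      apply div_le_div_of_nonneg_right ?_ (by positivity)
      exact_mod_cast Nat.cast_le.mpr (swapDigit_le _ (quatDigit_lt w _))
  have hfin : (∑ k ∈ Finset.range m, (swapDigit (quatDigit y k) : ℝ)/4^(k+1))
      = ∑ k ∈ Finset.range m, (swapDigit (quatDigit z k) : ℝ)/4^(k+1) := by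
    apply Finset.sum_congr rfl
    intro k hk
    rw [h k (Finset.mem_range.mp hk)]
  have := tail_bd y
  have := tail_bd z
  rw [key y, key z, hfin]
  rw [abs_le]
  constructor <;> [nlinarith [tail_bd y, tail_bd z]; nlinarith [tail_bd y, tail_bd z]]

lemma floor_eq_ediv (u : ℝ) (P : ℤ) (hP : 0 < P) : ⌊u⌋ = ⌊u * P⌋ / P := by
  set B := ⌊u * P⌋ with hB
  have hmod : P * (B / P) + B % P = B := Int.mul_ediv_add_emod B P
  have hm0 : 0 ≤ B % P := Int.emod_nonneg B (ne_of_gt hP)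
  have hm1 : B % P < P := Int.emod_lt_of_pos B hP
  have h1 : (B : ℝ) ≤ u * P := Int.floor_le _
  have h2 : u * P < (B : ℝ) + 1 := Int.lt_floor_add_one _
  have hPr : (0:ℝ) < (P:ℝ) := by exact_mod_cast hP
  rw [Int.floor_eq_iff]
  constructor
  · have hle : P * (B/P) ≤ B := by omega
    have hle' : ((P * (B/P) : ℤ) : ℝ) ≤ (B:ℝ) := by exact_mod_cast hle
    push_cast at hle'
    nlinarith
  · have hle : B + 1 ≤ (B/P + 1) * P := by nlinarith [hmod, hm0, hm1]
    have hle' : ((B:ℤ):ℝ) + 1 ≤ (((B/P + 1) * P : ℤ) : ℝ) := by exact_mod_cast hle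
    push_cast at hle'
    nlinarith

lemma floor_eq_of_floor_mul_eq {s t : ℝ} {P : ℤ} (hP : 0 < P) (h : ⌊s * P⌋ = ⌊t * P⌋) :
    ⌊s⌋ = ⌊t⌋ := by rw [floor_eq_ediv s P hP, floor_eq_ediv t P hP, h]

lemma quatDigit_eq_of_floor_eq {y z : ℝ} {m : ℕ} (h : ⌊y * 4^m⌋ = ⌊z * 4^m⌋) :
    ∀ k, k < m → quatDigit y k = quatDigit z k := by
  intro k hk
  have hP : (0:ℤ) < 4^(m-k-1) := by positivity
  have key : ∀ w : ℝ, w * 4^(k+1) * ((4:ℤ)^(m-k-1) : ℤ) = w * 4^m := by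
    intro w
    push_cast
    rw [mul_assoc, ← pow_add]
    congr 2
    omega
  have : ⌊y * 4^(k+1)⌋ = ⌊z * 4^(k+1)⌋ := by
    apply floor_eq_of_floor_mul_eq hP
    rw [key y, key z, h]
  unfold quatDigit
  rw [this]

lemma quatDigit_shift (x : ℝ) (hx : 0 ≤ x) (n : ℕ) (i : ℤ)
    (h0 : 0 ≤ (quatDigit x n : ℤ) + i) (h3 : (quatDigit x n : ℤ) + i ≤ 3) :
    (∀ k, k ≠ n → quatDigit (x + i/4^(n+1)) k = quatDigit x k) ∧
    ((quatDigit (x + i/4^(n+1)) n : ℤ) = (quatDigit x n : ℤ) + i) := by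
  set z := x + i/4^(n+1) with hz
  set M := ⌊x * 4^(n+1)⌋ with hM
  have hM0 : 0 ≤ M := Int.floor_nonneg.mpr (by positivity)
  have hd : (quatDigit x n : ℤ) = M % 4 := by
    unfold quatDigit
    rw [← hM]
    omega
  rw [hd] at h0 h3
  have hpow : (0:ℝ) < 4^(n+1) := by positivity
  have hzM : ⌊z * 4^(n+1)⌋ = M + i := by
    have : z * 4^(n+1) = x * 4^(n+1) + (i:ℝ) := by
      rw [hz]; field_simp
    rw [this, Int.floor_add_intCast, hM]
  have hMi0 : 0 ≤ M + i := by omega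
  have hz40 : (0:ℝ) ≤ z * 4^(n+1) := by
    have h1 : ((M + i : ℤ) : ℝ) ≤ z * 4^(n+1) := hzM ▸ Int.floor_le _
    have h2 : (0:ℝ) ≤ ((M + i : ℤ) : ℝ) := by exact_mod_cast hMi0
    linarith
  have hz0 : 0 ≤ z := by nlinarith
  -- digit at n
  have dign : (quatDigit z n : ℤ) = M % 4 + i := by
    unfold quatDigit
    rw [hzM]
    omega
  refine ⟨?_, by rw [dign, hd]⟩
  intro k hk
  rcases lt_or_gt_of_ne hk with hlt | hgt
  · -- k < n : show floors at level k+1 agree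
    have hj : k + 1 ≤ n := hlt
    set j := k + 1 with hjdef
    set N := ⌊x * 4^j⌋ with hN
    set P : ℤ := 4^(n+1-j) with hP
    have hPpos : 0 < P := by positivity
    have hPQ : ∃ Q : ℤ, P = 4 * Q := ⟨4^(n-j), by rw [hP, ← pow_succ']; congr 1; omega⟩
    have hPr : ((P:ℤ):ℝ) = 4^(n+1-j) := by rw [hP]; push_cast; ring
    have hprod : ∀ w : ℝ, w * 4^j * (P:ℝ) = w * 4^(n+1) := by
      intro w
      rw [hPr, mul_assoc, ← pow_add]
      congr 2
      omega
    have hA1 : N * P ≤ M := by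
      rw [hM]
      apply Int.le_floor.mpr
      push_cast
      calc ((N:ℝ) * P) ≤ x * 4^j * P := by
            have := Int.floor_le (x * 4^j)
            rw [← hN] at this
            nlinarith [hPpos, (by exact_mod_cast hPpos : (0:ℝ) < (P:ℝ))]
        _ = x * 4^(n+1) := hprod x
    have hA2 : M < (N + 1) * P := by
      rw [hM]
      apply Int.floor_lt.mpr
      push_cast
      calc x * 4^(n+1) = x * 4^j * P := (hprod x).symm
        _ < ((N:ℝ) + 1) * P := by
            have := Int.lt_floor_add_one (x * 4^j)
            rw [← hN] at this
            nlinarith [(by exact_mod_cast hPpos : (0:ℝ) < (P:ℝ))]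
    obtain ⟨Q, hQ⟩ := hPQ
    have hA2' : M < N * P + P := by nlinarith [hA2]
    obtain ⟨A, hA⟩ : ∃ A : ℤ, A = N * P := ⟨_, rfl⟩
    obtain ⟨A', hA'⟩ : ∃ A' : ℤ, A = 4 * A' := ⟨N * Q, by rw [hA, hQ]; ring⟩
    rw [← hA] at hA1 hA2'
    have key : A ≤ M + i ∧ M + 1 + i ≤ A + P := by omega
    rw [hA] at key
    -- conclude floor of z at level j equals N
    have hfz : ⌊z * 4^j⌋ = N := by
      rw [Int.floor_eq_iff]
      have hzP : z * 4^j * (P:ℝ) = x * 4^(n+1) + i := by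
        rw [hprod z, hz]; field_simp
      have hPrpos : (0:ℝ) < (P:ℝ) := by exact_mod_cast hPpos
      have hfl : (M:ℝ) ≤ x * 4^(n+1) := Int.floor_le _
      have hfu : x * 4^(n+1) < (M:ℝ) + 1 := Int.lt_floor_add_one _
      have k1 : ((N * P : ℤ) : ℝ) ≤ (M:ℝ) + i := by exact_mod_cast key.1
      have k2 : (M:ℝ) + 1 + i ≤ ((N * P : ℤ) : ℝ) + P := by exact_mod_cast key.2
      push_cast at k1 k2
      constructor
      · nlinarith
      · nlinarith
    have hfz' : ⌊z * 4^(k+1)⌋ = ⌊x * 4^(k+1)⌋ := hfz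
    unfold quatDigit
    omega
  · -- k > n
    have hzk : ⌊z * 4^(k+1)⌋ = ⌊x * 4^(k+1)⌋ + i * 4^(k-n) := by
      have hpows : (4:ℝ)^(k+1) = 4^(n+1) * 4^(k-n) := by
        rw [← pow_add]; congr 1; omega
      have : z * 4^(k+1) = x * 4^(k+1) + ((i * 4^(k-n) : ℤ) : ℝ) := by
        rw [hz, hpows]
        push_cast
        field_simp
      rw [this, Int.floor_add_intCast]
    have hF0 : 0 ≤ ⌊x * 4^(k+1)⌋ := Int.floor_nonneg.mpr (by positivity)
    have hzF0 : 0 ≤ ⌊z * 4^(k+1)⌋ := Int.floor_nonneg.mpr (by positivity)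
    have hdvd : (4:ℤ) ∣ i * 4^(k-n) := Dvd.dvd.mul_left (dvd_pow_self 4 (by omega : k-n ≠ 0)) i
    obtain ⟨T, hT⟩ := hdvd
    rw [hT] at hzk
    unfold quatDigit
    omega

lemma sd0 : swapDigit 0 = 0 := rfl
lemma sd1 : swapDigit 1 = 2 := rfl
lemma sd2 : swapDigit 2 = 1 := rfl
lemma sd3 : swapDigit 3 = 3 := rfl

lemma exists_choice (d : ℕ) (hd : d < 4) (c : ℝ) :
    ∃ (i : ℤ) (q : ℝ), i ≠ 0 ∧ |i| ≤ 2 ∧ 0 ≤ (d:ℤ) + i ∧ (d:ℤ) + i ≤ 3 ∧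
      (∀ d' : ℕ, (d':ℤ) = (d:ℤ) + i → ((swapDigit d' : ℝ) - (swapDigit d : ℝ)) = q * i) ∧
      |q| ≤ 2 ∧ 3/4 ≤ |q - c| := by
  rcases le_or_gt c (5/4) with hc | hc
  · have hq2 : |(2:ℝ)| ≤ 2 := by norm_num
    have hq34 : 3/4 ≤ |(2:ℝ) - c| := by rw [abs_of_nonneg (by linarith)]; linarith
    interval_cases d
    · exact ⟨1, 2, by norm_num, by norm_num, by norm_num, by norm_num,
        fun d' h => by have h1 : d' = 1 := (by omega); rw [h1, sd1, sd0]; norm_num,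
        hq2, hq34⟩
    · exact ⟨-1, 2, by norm_num, by norm_num, by norm_num, by norm_num,
        fun d' h => by have h1 : d' = 0 := (by omega); rw [h1, sd0, sd1]; norm_num,
        hq2, hq34⟩
    · exact ⟨1, 2, by norm_num, by norm_num, by norm_num, by norm_num,
        fun d' h => by have h1 : d' = 3 := (by omega); rw [h1, sd3, sd2]; norm_num,
        hq2, hq34⟩
    · exact ⟨-1, 2, by norm_num, by norm_num, by norm_num, by norm_num,
        fun d' h => by have h1 : d' = 2 := (by omega); rw [h1, sd2, sd3]; norm_num,
        hq2, hq34⟩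
  · have hq2 : |(1/2:ℝ)| ≤ 2 := by rw [abs_of_nonneg (by norm_num : (0:ℝ) ≤ 1/2)]; norm_num
    have hq34 : 3/4 ≤ |(1/2:ℝ) - c| := by
      rw [abs_sub_comm, abs_of_nonneg (by linarith)]; linarith
    interval_cases d
    · exact ⟨2, 1/2, by norm_num, by norm_num, by norm_num, by norm_num,
        fun d' h => by have h1 : d' = 2 := (by omega); rw [h1, sd2, sd0]; norm_num,
        hq2, hq34⟩
    · exact ⟨2, 1/2, by norm_num, by norm_num, by norm_num, by norm_num,
        fun d' h => by have h1 : d' = 3 := (by omega); rw [h1, sd3, sd1]; norm_num,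
        hq2, hq34⟩
    · exact ⟨-2, 1/2, by norm_num, by norm_num, by norm_num, by norm_num,
        fun d' h => by have h1 : d' = 0 := (by omega); rw [h1, sd0, sd2]; norm_num,
        hq2, hq34⟩
    · exact ⟨-2, 1/2, by norm_num, by norm_num, by norm_num, by norm_num,
        fun d' h => by have h1 : d' = 1 := (by omega); rw [h1, sd1, sd3]; norm_num,
        hq2, hq34⟩

set_option maxHeartbeats 2000000 in
/-- The digit-swapping map restricted to a set of positive measure is
nowhere differentiable: at every Lebesgue density point `x` of a measurable
`S ⊆ [0,1]` of positive measure and for every candidate derivative `c`, there are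
points `y ∈ S` arbitrarily close to `x` with difference quotient at least `1/2`
away from `c`. -/
theorem stmt12 (S : Set ℝ) (hSm : MeasurableSet S) (hSsub : S ⊆ Icc 0 1)
    (hSpos : 0 < volume S) (x : ℝ) (hxS : x ∈ S)
    (hdensity : Tendsto (fun r : ℝ => volume (S ∩ Icc (x - r) (x + r)) / volume (Icc (x - r) (x + r)))
      (nhdsWithin 0 (Ioi 0)) (nhds 1))
    (c : ℝ) :
    ∀ ε > 0, ∃ y ∈ S, y ≠ x ∧ |y - x| < ε ∧
      (1 : ℝ) / 2 ≤ |(swapMap x - swapMap y) / (x - y) - c| := by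
  intro ε hε
  have hx0 : (0:ℝ) ≤ x := (hSsub hxS).1
  have hev : ∀ᶠ r in nhdsWithin (0:ℝ) (Ioi 0),
      ENNReal.ofReal (255/256) < volume (S ∩ Icc (x - r) (x + r)) / volume (Icc (x - r) (x + r)) :=
    hdensity.eventually (eventually_gt_nhds (ENNReal.ofReal_lt_one.mpr (by norm_num)))
  obtain ⟨δ, hδ0, hδ⟩ := Metric.mem_nhdsWithin_iff.mp hev
  obtain ⟨n, hn⟩ : ∃ n : ℕ, ((1:ℝ)/4)^n < min δ ε :=
    exists_pow_lt_of_lt_one (lt_min hδ0 hε) (by norm_num)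
  rw [one_div_pow] at hn
  set r : ℝ := 1/4^n with hrdef
  have hK : (0:ℝ) < 4^n := by positivity
  have hr0 : 0 < r := by positivity
  have hrδ : r < δ := lt_of_lt_of_le hn (min_le_left _ _)
  have hrε : r < ε := lt_of_lt_of_le hn (min_le_right _ _)
  have hpow1 : (4:ℝ)^(n+1) = 4 * 4^n := by rw [pow_succ]; ring
  have hpowm : (4:ℝ)^(n+3) = 64 * 4^n := by rw [pow_add]; norm_num; ring
  -- ratio fact at radius r
  have hratio := hδ ⟨by simpa [Real.dist_eq, abs_of_pos hr0] using hrδ, hr0⟩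
  simp only [mem_setOf_eq] at hratio
  have hIvol : volume (Icc (x - r) (x + r)) = ENNReal.ofReal (2*r) := by
    rw [Real.volume_Icc]; congr 1; ring
  have hIne : volume (Icc (x - r) (x + r)) ≠ 0 := by
    rw [hIvol]; simp [ENNReal.ofReal_eq_zero]; linarith
  have hInt : volume (Icc (x - r) (x + r)) ≠ ⊤ := by rw [hIvol]; exact ENNReal.ofReal_ne_top
  have hSI : ENNReal.ofReal (255/256) * volume (Icc (x - r) (x + r))
      < volume (S ∩ Icc (x - r) (x + r)) :=
    (ENNReal.lt_div_iff_mul_lt (Or.inl hIne) (Or.inl hInt)).mp hratio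
  -- choose slope
  obtain ⟨i, q, hi0, hi2, hdi0, hdi3, hslope, hq2, hq34⟩ :=
    exists_choice (quatDigit x n) (quatDigit_lt x n) c
  set z : ℝ := x + i/4^(n+1) with hzdef
  obtain ⟨hdig, hdign⟩ := quatDigit_shift x hx0 n i hdi0 hdi3
  -- the cell of z at level n+3
  set m : ℕ := n + 3 with hm
  set B : ℤ := ⌊z * 4^m⌋ with hB
  have hzB1 : ((B:ℝ)) ≤ z * 4^m := Int.floor_le _
  have hzB2 : z * 4^m < (B:ℝ) + 1 := Int.lt_floor_add_one _
  have hKm : (0:ℝ) < 4^m := by positivity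
  have hzlo : (B:ℝ)/4^m ≤ z := by rw [div_le_iff₀ hKm]; linarith
  have hzhi : z < (B:ℝ)/4^m + 1/4^m := by
    rw [show (B:ℝ)/4^m + 1/4^m = ((B:ℝ)+1)/4^m from by ring, lt_div_iff₀ hKm]
    linarith
  have hir : (|(i:ℝ)|) ≤ 2 := by exact_mod_cast hi2
  have hir1 : (1:ℝ) ≤ |(i:ℝ)| := by exact_mod_cast Int.one_le_abs hi0
  have hzx : |z - x| ≤ 2/(4*4^n) := by
    rw [hzdef]
    have : x + (i:ℝ)/4^(n+1) - x = (i:ℝ)/4^(n+1) := by ring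
    rw [this, abs_div, abs_of_pos (by positivity : (0:ℝ) < (4:ℝ)^(n+1)), hpow1]
    apply div_le_div_of_nonneg_right hir (by positivity)
  -- J ⊆ Icc (x-r) (x+r)
  have hJI : Ico ((B:ℝ)/4^m) ((B:ℝ)/4^m + 1/4^m) ⊆ Icc (x - r) (x + r) := by
    intro w hw
    obtain ⟨hw1, hw2⟩ := hw
    have hwz : |w - z| ≤ 1/4^m := by rw [abs_le]; constructor <;> linarith
    have h1 : |w - x| ≤ 1/4^m + 2/(4*4^n) := by
      calc |w - x| ≤ |w - z| + |z - x| := abs_sub_le w z x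
        _ ≤ 1/4^m + 2/(4*4^n) := add_le_add hwz hzx
    rw [abs_le] at h1
    have hmr : (1:ℝ)/4^m + 2/(4*4^n) ≤ r := by
      rw [hm, hpowm, hrdef]
      rw [div_add_div _ _ (by positivity) (by positivity), div_le_div_iff₀ (by positivity) (by positivity)]
      ring_nf
      nlinarith [pow_pos (show (0:ℝ) < 4 by norm_num) (n*2), pow_pos (show (0:ℝ) < 4 by norm_num) n]
    constructor <;> [linarith [h1.1]; linarith [h1.2]]
  -- find y ∈ S ∩ J
  obtain ⟨y, hyS, hyJ⟩ : ∃ y, y ∈ S ∧ y ∈ Ico ((B:ℝ)/4^m) ((B:ℝ)/4^m + 1/4^m) := by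
    by_contra hcon
    push_neg at hcon
    have hJIS : Ico ((B:ℝ)/4^m) ((B:ℝ)/4^m + 1/4^m) ⊆ (Icc (x - r) (x + r)) \ S := by
      intro w hw
      exact ⟨hJI hw, fun hwS => hcon w hwS hw⟩
    have hJvol : volume (Ico ((B:ℝ)/4^m) ((B:ℝ)/4^m + 1/4^m)) = ENNReal.ofReal (1/4^m) := by
      rw [Real.volume_Ico]; congr 1; ring
    have h1 : volume (Ico ((B:ℝ)/4^m) ((B:ℝ)/4^m + 1/4^m))
        ≤ volume ((Icc (x - r) (x + r)) \ S) := measure_mono hJIS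
    have h2 : volume ((Icc (x - r) (x + r)) \ S) + volume ((Icc (x - r) (x + r)) ∩ S)
        = volume (Icc (x - r) (x + r)) := measure_diff_add_inter _ hSm
    have h3 : ENNReal.ofReal (1/4^m) + ENNReal.ofReal (255/256) * volume (Icc (x - r) (x + r))
        < volume ((Icc (x - r) (x + r)) \ S) + volume ((Icc (x - r) (x + r)) ∩ S) := by
      apply ENNReal.add_lt_add_of_le_of_lt (by simp) (by rw [← hJvol]; exact h1)
      rw [inter_comm]
      exact hSI
    rw [h2, hIvol] at h3
    rw [← ENNReal.ofReal_mul (by norm_num : (0:ℝ) ≤ 255/256)] at h3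
    rw [← ENNReal.ofReal_add (by positivity) (by positivity)] at h3
    rw [ENNReal.ofReal_lt_ofReal_iff (by positivity)] at h3
    have e1 : (1:ℝ)/4^m = (1/64)*r := by rw [hpowm, hrdef]; ring
    rw [e1] at h3
    linarith
  -- y determines same digits as z below m
  have hyfloor : ⌊y * 4^m⌋ = B := by
    rw [Int.floor_eq_iff]
    obtain ⟨h1, h2⟩ := hyJ
    constructor
    · rw [div_le_iff₀ hKm] at h1; linarith
    · have h2' : y < ((B:ℝ)+1)/4^m := by
        rw [show ((B:ℝ)+1)/4^m = (B:ℝ)/4^m + 1/4^m from by ring]; exact h2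
      rw [lt_div_iff₀ hKm] at h2'
      push_cast
      linarith
  -- digit agreement between y and z
  have hydig : ∀ k, k < m → quatDigit y k = quatDigit z k :=
    quatDigit_eq_of_floor_eq (by rw [hyfloor, hB])
  have heyz : |swapMap y - swapMap z| ≤ 1/4^m := swapMap_close y z m hydig
  have hyz : |y - z| ≤ 1/4^m := by
    rw [abs_le]
    obtain ⟨h1, h2⟩ := hyJ
    constructor <;> [linarith; linarith]
  -- exact slope between x and z
  have hnum : ((swapDigit (quatDigit x n)):ℝ) - ((swapDigit (quatDigit z n)):ℝ) = -(q*(i:ℝ)) := by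
    have hsl := hslope (quatDigit z n) hdign
    linarith
  have hfxz : swapMap x - swapMap z = -(q*(i:ℝ))*(1/4^(n+1)) := by
    rw [swapMap_sub_single x z n (fun k hk => (hdig k hk).symm), hnum]
    ring
  -- scale: t = 1/4^m
  set t : ℝ := 1/4^m with htdef
  have ht0 : 0 < t := by rw [htdef]; positivity
  have h16t : (1:ℝ)/4^(n+1) = 16*t := by rw [htdef, hpow1, hpowm]; ring
  have hr64 : r = 64*t := by rw [hrdef, htdef, hpowm]; ring
  set I : ℝ := (i:ℝ) with hIdef
  have hxz : x - z = -I*(16*t) := by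
    rw [← h16t, hzdef]; ring
  have hfxz' : swapMap x - swapMap z = -(q*I)*(16*t) := by rw [hfxz, h16t]
  set a : ℝ := z - y with hadef
  set b : ℝ := swapMap z - swapMap y with hbdef
  have hat : |a| ≤ t := by rw [hadef, abs_sub_comm]; exact hyz
  have hbt : |b| ≤ t := by rw [hbdef, abs_sub_comm]; exact heyz
  have hDeq : x - y = -I*(16*t) + a := by rw [← hxz, hadef]; ring
  have hNeq : swapMap x - swapMap y = -(q*I)*(16*t) + b := by rw [← hfxz', hbdef]; ring
  have habsI : |(-I*(16*t))| = |I| * (16*t) := by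
    rw [abs_mul, abs_neg, abs_of_pos (by linarith : (0:ℝ) < 16*t)]
  -- lower bound on |x - y|
  have hD15 : 15*t ≤ |x - y| := by
    have h1 := abs_sub_abs_le_abs_sub (-I*(16*t)) (-a)
    rw [abs_neg, show -I*(16*t) - -a = x - y from by rw [hDeq]; ring, habsI] at h1
    nlinarith [hir1, ht0, hat]
  have hD33 : |x - y| ≤ 33*t := by
    have h1 := abs_add_le (-I*(16*t)) a
    rw [← hDeq, habsI] at h1
    nlinarith [hir, ht0, hat]
  have hDne : x - y ≠ 0 := by
    intro h0
    rw [h0, abs_zero] at hD15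
    linarith
  have hyx : y ≠ x := by
    intro h0
    exact hDne (by rw [h0, sub_self])
  refine ⟨y, hyS, hyx, ?_, ?_⟩
  · rw [abs_sub_comm]
    linarith
  · -- quotient estimate
    have hkey : (swapMap x - swapMap y)/(x - y) - q = ((swapMap x - swapMap y) - q*(x - y))/(x - y) := by
      field_simp
    have hnum3 : |(swapMap x - swapMap y) - q*(x - y)| ≤ 3*t := by
      rw [hNeq, hDeq, show -(q*I)*(16*t) + b - q*(-I*(16*t) + a) = b - q*a from by ring]
      calc |b - q*a| ≤ |b| + |q*a| := abs_sub b (q*a)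
        _ ≤ t + 2*t := by
            apply add_le_add hbt
            rw [abs_mul]
            nlinarith [abs_nonneg a, abs_nonneg q]
        _ = 3*t := by ring
    have hq5 : |(swapMap x - swapMap y)/(x - y) - q| ≤ 1/5 := by
      rw [hkey, abs_div]
      rw [div_le_iff₀ (by linarith : (0:ℝ) < |x - y|)]
      nlinarith [hnum3, hD15]
    have htri : |q - c| ≤ |q - (swapMap x - swapMap y)/(x - y)| + |(swapMap x - swapMap y)/(x - y) - c| :=
      abs_sub_le _ _ _
    rw [abs_sub_comm q ((swapMap x - swapMap y)/(x - y))] at htri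
    linarith
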